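/- Consider the 6-dimensional real Lie algebra determined by a (1,0)-basis μ¹,μ²,μ³ with dμ¹ = dμ² = 0 and 2(1−|a|²)dμ³ = 2·conj(a)·μ¹∧μ² + i·μ¹∧conj(μ¹) + μ¹∧conj(μ²) + μ²∧conj(μ¹) − i|a|²·μ²∧conj(μ²), for a ∈ ℂ with 0 < |a| < 1. Then the (1,1)-form 2Ω = i r² μ¹∧conj(μ¹) + i|a|²r² μ²∧conj(μ²) + i t² μ³∧conj(μ³) (for any r,t > 0) satisfies d(Ω∧Ω) = 0, i.e. Ω defines a balanced Hermitian structure. -/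

import Mathlib

set_option maxHeartbeats 2000000


/-- The inclusion `Fin m → Fin (m+2)` skipping the two indices `i, j`. -/
def skip2 {m : ℕ} (i j : Fin (m + 2)) (l : Fin m) : Fin (m + 2) :=
  if (l : ℕ) < min (i : ℕ) (j : ℕ) then ⟨l, by have := l.isLt; omega⟩
  else if (l : ℕ) + 1 < max (i : ℕ) (j : ℕ) then ⟨l + 1, by have := l.isLt; omega⟩
  else ⟨l + 2, by have := l.isLt; omega⟩

/-- The Chevalley–Eilenberg differential of a complex-valued `(m+1)`-form on a
Lie algebra `g`:
`(dσ)(X₀,…,X_{m+1}) = ∑_{i<j} (-1)^{i+j} σ(⁅Xᵢ,Xⱼ⁆, X₀,…,X̂ᵢ,…,X̂ⱼ,…)`. -/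
noncomputable def ceD {g : Type} [LieRing g] {m : ℕ} (σ : (Fin (m + 1) → g) → ℂ) :
    (Fin (m + 2) → g) → ℂ := fun X =>
  ∑ i : Fin (m + 2), ∑ j : Fin (m + 2),
    if (i : ℕ) < (j : ℕ) then
      (-1 : ℂ) ^ ((i : ℕ) + (j : ℕ)) *
        σ (Fin.cons ⁅X i, X j⁆ fun l => X (skip2 i j l))
    else 0

/-- Remark 5.10 / Theorem 5.9: along the deformation `Jₐ` (`0 < |a| < 1`) of
the abelian complex structure on `h₄`, given by `dμ¹ = dμ² = 0` and
`2(1-|a|²)dμ³ = 2ā μ¹∧μ² + i μ¹∧μ̄¹ + μ¹∧μ̄² + μ²∧μ̄¹ - i|a|² μ²∧μ̄²`, the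
`(1,1)`-form `2Ω = i r² μ¹∧μ̄¹ + i|a|²r² μ²∧μ̄² + i t² μ³∧μ̄³` satisfies
`d(Ω∧Ω) = 0`, i.e. it is balanced. -/
theorem stmt17 (g : Type) [LieRing g] [LieAlgebra ℝ g]
    (J : g →ₗ[ℝ] g) (hJ : ∀ X, J (J X) = -X)
    (μ₁ μ₂ μ₃ : g →ₗ[ℝ] ℂ)
    (h1 : ∀ X, μ₁ (J X) = Complex.I * μ₁ X)
    (h2 : ∀ X, μ₂ (J X) = Complex.I * μ₂ X)
    (h3 : ∀ X, μ₃ (J X) = Complex.I * μ₃ X)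
    (hcoord : Function.Bijective (fun X : g => (μ₁ X, μ₂ X, μ₃ X)))
    (a : ℂ) (ha0 : 0 < ‖a‖) (ha1 : ‖a‖ < 1)
    (hd1 : ∀ X Y : g, μ₁ ⁅X, Y⁆ = 0)
    (hd2 : ∀ X Y : g, μ₂ ⁅X, Y⁆ = 0)
    (hd3 : ∀ X Y : g, ((2 * (1 - ‖a‖ ^ 2) : ℝ) : ℂ) * (-μ₃ ⁅X, Y⁆) =
      2 * (starRingEnd ℂ) a * (μ₁ X * μ₂ Y - μ₁ Y * μ₂ X)
        + Complex.I * (μ₁ X * (starRingEnd ℂ) (μ₁ Y) - μ₁ Y * (starRingEnd ℂ) (μ₁ X))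
        + (μ₁ X * (starRingEnd ℂ) (μ₂ Y) - μ₁ Y * (starRingEnd ℂ) (μ₂ X))
        + (μ₂ X * (starRingEnd ℂ) (μ₁ Y) - μ₂ Y * (starRingEnd ℂ) (μ₁ X))
        - Complex.I * ((‖a‖ ^ 2 : ℝ) : ℂ) *
            (μ₂ X * (starRingEnd ℂ) (μ₂ Y) - μ₂ Y * (starRingEnd ℂ) (μ₂ X)))
    (r t : ℝ) (hr : 0 < r) (ht : 0 < t)
    (Ω : g → g → ℂ)
    (hΩ : ∀ X Y : g, Ω X Y =
      (Complex.I * (r ^ 2 : ℝ) / 2) *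
          (μ₁ X * (starRingEnd ℂ) (μ₁ Y) - μ₁ Y * (starRingEnd ℂ) (μ₁ X))
        + (Complex.I * ((‖a‖ ^ 2 * r ^ 2 : ℝ) : ℂ) / 2) *
          (μ₂ X * (starRingEnd ℂ) (μ₂ Y) - μ₂ Y * (starRingEnd ℂ) (μ₂ X))
        + (Complex.I * (t ^ 2 : ℝ) / 2) *
          (μ₃ X * (starRingEnd ℂ) (μ₃ Y) - μ₃ Y * (starRingEnd ℂ) (μ₃ X))) :
    ∀ X : Fin 5 → g,
      ceD (fun Y : Fin 4 → g =>
        2 * (Ω (Y 0) (Y 1) * Ω (Y 2) (Y 3) - Ω (Y 0) (Y 2) * Ω (Y 1) (Y 3)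
          + Ω (Y 0) (Y 3) * Ω (Y 1) (Y 2))) X = 0 := by
  intro X
  have c0 : ∀ (B : g) (f : Fin 3 → g), (Fin.cons B f : Fin 4 → g) 0 = B := fun _ _ => rfl
  have c1 : ∀ (B : g) (f : Fin 3 → g), (Fin.cons B f : Fin 4 → g) 1 = f 0 := fun _ _ => rfl
  have c2 : ∀ (B : g) (f : Fin 3 → g), (Fin.cons B f : Fin 4 → g) 2 = f 1 := fun _ _ => rfl
  have c3 : ∀ (B : g) (f : Fin 3 → g), (Fin.cons B f : Fin 4 → g) 3 = f 2 := fun _ _ => rfl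
  have hcne : ((2 * (1 - ‖a‖ ^ 2) : ℝ) : ℂ) ≠ 0 := by
    have h2 : ‖a‖ ^ 2 < 1 := by nlinarith [norm_nonneg a]
    simp only [ne_eq, Complex.ofReal_eq_zero]
    nlinarith
  have he : ∀ U V : g, μ₃ ⁅U, V⁆ =
      -(((2 * (1 - ‖a‖ ^ 2) : ℝ) : ℂ)⁻¹ *
        (2 * (starRingEnd ℂ) a * (μ₁ U * μ₂ V - μ₁ V * μ₂ U)
          + Complex.I * (μ₁ U * (starRingEnd ℂ) (μ₁ V) - μ₁ V * (starRingEnd ℂ) (μ₁ U))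
          + (μ₁ U * (starRingEnd ℂ) (μ₂ V) - μ₁ V * (starRingEnd ℂ) (μ₂ U))
          + (μ₂ U * (starRingEnd ℂ) (μ₁ V) - μ₂ V * (starRingEnd ℂ) (μ₁ U))
          - Complex.I * ((‖a‖ ^ 2 : ℝ) : ℂ) *
              (μ₂ U * (starRingEnd ℂ) (μ₂ V) - μ₂ V * (starRingEnd ℂ) (μ₂ U)))) := by
    intro U V
    rw [← hd3 U V]; simp only [mul_neg, neg_neg, ← mul_assoc, inv_mul_cancel₀ hcne, one_mul]
  have hec : ∀ U V : g, (starRingEnd ℂ) (μ₃ ⁅U, V⁆) =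
      -(((2 * (1 - ‖a‖ ^ 2) : ℝ) : ℂ)⁻¹ *
        (2 * a * ((starRingEnd ℂ) (μ₁ U) * (starRingEnd ℂ) (μ₂ V)
            - (starRingEnd ℂ) (μ₁ V) * (starRingEnd ℂ) (μ₂ U))
          - Complex.I * ((starRingEnd ℂ) (μ₁ U) * μ₁ V - (starRingEnd ℂ) (μ₁ V) * μ₁ U)
          + ((starRingEnd ℂ) (μ₁ U) * μ₂ V - (starRingEnd ℂ) (μ₁ V) * μ₂ U)
          + ((starRingEnd ℂ) (μ₂ U) * μ₁ V - (starRingEnd ℂ) (μ₂ V) * μ₁ U)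
          + Complex.I * ((‖a‖ ^ 2 : ℝ) : ℂ) *
              ((starRingEnd ℂ) (μ₂ U) * μ₂ V - (starRingEnd ℂ) (μ₂ V) * μ₂ U))) := by
    intro U V
    rw [he U V]
    simp only [map_neg, map_mul, map_add, map_sub, map_inv₀, map_ofNat,
      Complex.conj_conj, Complex.conj_I, Complex.conj_ofReal]
    ring
  simp only [ceD, Fin.sum_univ_succ, Fin.sum_univ_zero, c0, c1, c2, c3]
  norm_num [skip2]
  simp only [show ((2 : Fin 4).succ : Fin 5) = 3 from rfl,
    show (((2 : Fin 3).succ : Fin 4).succ : Fin 5) = 4 from rfl,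
    show (⟨2, by omega⟩ : Fin 5) = 2 from rfl,
    show (⟨3, by omega⟩ : Fin 5) = 3 from rfl,
    show (⟨4, by omega⟩ : Fin 5) = 4 from rfl]
  simp only [hΩ, hd1, hd2, map_zero]
  simp only [hec]
  simp only [he]
  push_cast
  ring
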